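/- Let ε ∈ {1, −1} and let m₁, m₂, m₃, f, φ : ℝ → ℝ satisfy the asymptotic Darboux system m₁' = ε·m₂ − f, m₂' = φ·m₃ − ε·m₁, m₃' = −φ·m₂ on ℝ, where m₁, m₂, m₃ are differentiable, f is twice differentiable, and φ is differentiable with φ(θ) ≠ 0 for all θ. Then m₁ is three times differentiable and satisfies the third-order equation (m₁''' + f'') − (φ'/φ)·(m₁'' + m₁ + f') + (1 + φ²)·m₁' + φ²·f = 0 on ℝ. -/

import Mathlib

/-- Asymptotic case: the coefficients of the asymptotic Darboux system give a
third-order ODE for `m₁` (paper's equation (14)). -/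
theorem asymptotic_third_order_ode
    (ε : ℝ) (hε : ε = 1 ∨ ε = -1)
    (m₁ m₂ m₃ f φ : ℝ → ℝ)
    (hm₁ : Differentiable ℝ m₁) (hm₂ : Differentiable ℝ m₂)
    (hm₃ : Differentiable ℝ m₃)
    (hf : Differentiable ℝ f) (hf' : Differentiable ℝ (deriv f))
    (hφ : Differentiable ℝ φ) (hφ0 : ∀ θ, φ θ ≠ 0)
    (h1 : ∀ θ, deriv m₁ θ = ε * m₂ θ - f θ)
    (h2 : ∀ θ, deriv m₂ θ = φ θ * m₃ θ - ε * m₁ θ)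
    (h3 : ∀ θ, deriv m₃ θ = -(φ θ) * m₂ θ) :
    Differentiable ℝ (deriv m₁) ∧ Differentiable ℝ (deriv (deriv m₁)) ∧
      ∀ θ, (deriv (deriv (deriv m₁)) θ + deriv (deriv f) θ)
          - (deriv φ θ / φ θ) * (deriv (deriv m₁) θ + m₁ θ + deriv f θ)
          + (1 + (φ θ) ^ 2) * deriv m₁ θ + (φ θ) ^ 2 * f θ = 0 := by
  have e1 : deriv m₁ = fun θ => ε * m₂ θ - f θ := funext h1
  have d1 : Differentiable ℝ (deriv m₁) := by
    rw [e1]; exact (hm₂.const_mul ε).sub hf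
  have e2 : deriv (deriv m₁)
      = fun θ => ε * (φ θ * m₃ θ - ε * m₁ θ) - deriv f θ := by
    rw [e1]; funext θ
    rw [deriv_fun_sub ((hm₂ θ).const_mul ε) (hf θ), deriv_const_mul ε (hm₂ θ), h2]
  have dφm₃ : Differentiable ℝ fun θ => φ θ * m₃ θ - ε * m₁ θ :=
    (hφ.mul hm₃).sub (hm₁.const_mul ε)
  have d2 : Differentiable ℝ (deriv (deriv m₁)) := by
    rw [e2]; exact (dφm₃.const_mul ε).sub hf'
  refine ⟨d1, d2, fun θ => ?_⟩
  have e3 : deriv (deriv (deriv m₁)) θ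
      = ε * (deriv φ θ * m₃ θ + φ θ * deriv m₃ θ - ε * deriv m₁ θ)
        - deriv (deriv f) θ := by
    rw [e2, deriv_fun_sub ((dφm₃ θ).const_mul ε) (hf' θ),
      deriv_const_mul ε (dφm₃ θ),
      deriv_fun_sub (f := fun y => φ y * m₃ y) ((hφ θ).mul (hm₃ θ)) ((hm₁ θ).const_mul ε),
      deriv_fun_mul (hφ θ) (hm₃ θ), deriv_const_mul ε (hm₁ θ)]
  have hB := congrFun e2 θ
  rw [e3, hB, h1, h3]
  rcases hε with h | h <;> subst h <;> field_simp [hφ0 θ] <;> ring
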